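/- arXiv:1004.3973 — 4 statements merged into one kernel-verified Lean document; each statement's English description precedes it below -/
import Mathlib

section
/- Let S be a semigroup and P a primitive predicate on S with S_P = {s ∈ S | P(s)}. Then rk(S) = rk(S_P) + rk(S : S_P), where rk(S) denotes the minimal cardinality of a generating set of S, and rk(S : S_P) denotes the minimal cardinality of a set X ⊆ S such that S_P ∪ X generates S. -/
/-- The rank of a semigroup: the least cardinality of a generating set. -/
noncomputable def sgRank (S : Type*) [Mul S] : Cardinal :=
  ⨅ X : {X : Set S // Subsemigroup.closure X = ⊤}, Cardinal.mk X

/-- The relative rank `rk(S : B)` of a subset `B` of a semigroup `S`: the least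
cardinality of a set `X` with `⟨B ∪ X⟩ = S`. -/
noncomputable def sgRelRank (S : Type*) [Mul S] (B : Set S) : Cardinal :=
  ⨅ X : {X : Set S // Subsemigroup.closure (B ∪ X) = ⊤}, Cardinal.mk X

/-- For a primitive predicate `P` on a semigroup `S` with
`S_P = {s | P s}` one has `rk(S) = rk(S_P) + rk(S : S_P)`. -/
theorem rank_eq_rank_add_relRank (S : Type*) [Semigroup S] (P : S → Prop)
    (hP : ∀ a b : S, P (a * b) ↔ P a ∧ P b) :
    sgRank S =
      sgRank (⟨{s : S | P s}, fun {a b} ha hb => (hP a b).2 ⟨ha, hb⟩⟩ : Subsemigroup S) +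
        sgRelRank S {s : S | P s} := by
  set SP : Subsemigroup S := ⟨{s : S | P s}, fun {a b} ha hb => (hP a b).2 ⟨ha, hb⟩⟩ with hSP
  -- key fact 1 : a generating set of SP, pushed to S, has closure containing SP
  have key1 : ∀ (Y : Set SP), Subsemigroup.closure Y = ⊤ →
      (SP : Set S) ⊆ (Subsemigroup.closure (Subtype.val '' Y) : Subsemigroup S) := by
    intro Y hY s hs
    have h : (⊤ : Subsemigroup SP) ≤
        (Subsemigroup.closure (Subtype.val '' Y)).comap (MulMemClass.subtype SP) := by
      rw [← hY]
      exact Subsemigroup.closure_le.2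
        (fun y hy => Subsemigroup.subset_closure (Set.mem_image_of_mem _ hy))
    exact h (Subsemigroup.mem_top (⟨s, hs⟩ : SP))
  apply le_antisymm
  · -- rk S ≤ rk SP + relrank : pick witnesses attaining each infimum
    have ne1 : Nonempty {X : Set SP // Subsemigroup.closure X = ⊤} :=
      ⟨⟨Set.univ, Subsemigroup.closure_univ⟩⟩
    have ne2 : Nonempty {X : Set S // Subsemigroup.closure ((SP : Set S) ∪ X) = ⊤} :=
      ⟨⟨Set.univ, by rw [Set.union_univ]; exact Subsemigroup.closure_univ⟩⟩
    obtain ⟨⟨Y, hY⟩, hYmk⟩ : ∃ Y : {X : Set SP // Subsemigroup.closure X = ⊤},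
        Cardinal.mk Y.1 = sgRank SP := by
      have := csInf_mem (Set.range_nonempty
        (fun X : {X : Set SP // Subsemigroup.closure X = ⊤} => Cardinal.mk X.1))
      rw [← iInf, ← sgRank] at this  -- hope
      obtain ⟨Y, hY⟩ := this
      exact ⟨Y, hY⟩
    obtain ⟨⟨X, hX⟩, hXmk⟩ : ∃ X : {X : Set S // Subsemigroup.closure ((SP : Set S) ∪ X) = ⊤},
        Cardinal.mk X.1 = sgRelRank S (SP : Set S) := by
      have := csInf_mem (Set.range_nonempty
        (fun X : {X : Set S // Subsemigroup.closure ((SP : Set S) ∪ X) = ⊤} => Cardinal.mk X.1))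
      obtain ⟨X, hX⟩ := this
      exact ⟨X, hX⟩
    have hgen : Subsemigroup.closure (Subtype.val '' Y ∪ X) = ⊤ := by
      rw [eq_top_iff, ← hX]
      apply Subsemigroup.closure_le.2
      rintro s (hs | hs)
      · exact Subsemigroup.closure_mono Set.subset_union_left (key1 Y hY hs)
      · exact Subsemigroup.subset_closure (Or.inr hs)
    calc sgRank S ≤ Cardinal.mk ↥(Subtype.val '' Y ∪ X) :=
            ciInf_le (OrderBot.bddBelow _) (⟨_, hgen⟩ : {X : Set S // Subsemigroup.closure X = ⊤})
      _ ≤ Cardinal.mk ↥(Subtype.val '' Y) + Cardinal.mk ↥X := Cardinal.mk_union_le _ _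
      _ = Cardinal.mk ↥Y + Cardinal.mk ↥X := by
            rw [Cardinal.mk_image_eq Subtype.val_injective]
      _ = _ := by rw [hYmk, hXmk]; rfl
  · -- rk SP + relrank ≤ rk S
    rw [sgRank]
    have : Nonempty {X : Set S // Subsemigroup.closure X = ⊤} :=
      ⟨⟨Set.univ, Subsemigroup.closure_univ⟩⟩
    refine le_ciInf fun ⟨Z, hZ⟩ => ?_
    -- split Z
    have h1 : Subsemigroup.closure ((Subtype.val ⁻¹' Z : Set SP)) = ⊤ := by
      set K : Subsemigroup S :=
        { carrier := {x | ∀ hx : P x, (⟨x, hx⟩ : SP) ∈ Subsemigroup.closure (Subtype.val ⁻¹' Z)}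
          mul_mem' := fun {x y} hx hy hxy => by
            obtain ⟨hx', hy'⟩ := (hP x y).1 hxy
            exact mul_mem (hx hx') (hy hy') } with hK
      have hZK : Subsemigroup.closure Z ≤ K :=
        Subsemigroup.closure_le.2 (fun z hz (hpz : P z) => Subsemigroup.subset_closure hz)
      rw [eq_top_iff]
      rintro ⟨s, hs⟩ _
      exact hZK (hZ ▸ Subsemigroup.mem_top s) hs
    have h2 : Subsemigroup.closure ((SP : Set S) ∪ (Z \ {s | P s})) = ⊤ := by
      rw [eq_top_iff, ← hZ]
      apply Subsemigroup.closure_le.2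
      intro z hz
      by_cases hpz : P z
      · exact Subsemigroup.subset_closure (Or.inl hpz)
      · exact Subsemigroup.subset_closure (Or.inr ⟨hz, hpz⟩)
    have c1 : sgRank SP ≤ Cardinal.mk ↥(Subtype.val ⁻¹' Z : Set SP) :=
      ciInf_le (OrderBot.bddBelow _) (⟨_, h1⟩ : {X : Set SP // Subsemigroup.closure X = ⊤})
    have c2 : sgRelRank S (SP : Set S) ≤ Cardinal.mk ↥(Z \ {s | P s} : Set S) :=
      ciInf_le (OrderBot.bddBelow _) (⟨_, h2⟩ : {X : Set S // Subsemigroup.closure ((SP : Set S) ∪ X) = ⊤})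
    have hcard : Cardinal.mk ↥(Subtype.val ⁻¹' Z : Set SP) + Cardinal.mk ↥(Z \ {s | P s} : Set S)
        = Cardinal.mk ↥Z := by
      have : Cardinal.mk ↥(Subtype.val ⁻¹' Z : Set SP) = Cardinal.mk ↥(Z ∩ {s | P s} : Set S) := by
        apply Cardinal.mk_congr
        exact ⟨fun x => ⟨x.1.1, x.2, x.1.2⟩, fun x => ⟨⟨x.1, x.2.2⟩, x.2.1⟩,
          fun x => rfl, fun x => rfl⟩
      rw [this, ← Cardinal.mk_union_of_disjoint
        (Set.disjoint_sdiff_right.mono_left Set.inter_subset_right), Set.inter_union_diff]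
    exact hcard ▸ add_le_add c1 c2
end

section
/- Let G be a group, m ≥ 1, g ∈ G an element of finite odd order, and σ ∈ G an element of order 2. Let H be the subgroup of the wreath product G ≀ S_m generated by a = [σ,2]·(1,…,m) and b = [g,3]·(1,2). Then the elements [g,3], [σ,1], the m-cycle (1,…,m), and the transposition (1,2) all lie in H. -/
open Equiv

/-- The permutation action of `S_m` on `G^m`, `(π • f) j = f (π⁻¹ j)`. -/
def permHom (G : Type*) [Group G] (m : ℕ) : Equiv.Perm (Fin m) →* MulAut (Fin m → G) where
  toFun π := { Equiv.arrowCongr π (Equiv.refl G) with map_mul' := fun f g => rfl }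
  map_one' := by ext f i; rfl
  map_mul' π σ := by ext f i; rfl

/-- The wreath product `G ≀ S_m = G^m ⋊ S_m`. -/
abbrev Wr (G : Type*) [Group G] (m : ℕ) : Type _ :=
  SemidirectProduct (Fin m → G) (Equiv.Perm (Fin m)) (permHom G m)

section AuxSG

open SemidirectProduct
variable {G : Type*} [Group G] {m : ℕ}

lemma SG.permHom_apply (p : Equiv.Perm (Fin m)) (f : Fin m → G) (j : Fin m) :
    permHom G m p f j = f (p⁻¹ j) := rfl

lemma SG.permHom_mulSingle (p : Equiv.Perm (Fin m)) (i : Fin m) (x : G) :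
    permHom G m p (Pi.mulSingle i x) = Pi.mulSingle (p i) x := by
  ext j
  by_cases h : j = p i
  · subst h; rw [SG.permHom_apply, show p⁻¹ (p i) = i from p.symm_apply_apply i]; simp
  · rw [SG.permHom_apply, Pi.mulSingle_apply, Pi.mulSingle_apply, if_neg h, if_neg]
    intro hc
    exact h (by rw [← hc]; simp)

lemma SG.mul_inl_inr (f f' : Fin m → G) (p p' : Equiv.Perm (Fin m)) :
    ((inl f * inr p) * (inl f' * inr p') : Wr G m) = inl (f * permHom G m p f') * inr (p * p') := by
  ext <;> simp

lemma SG.commS (p : Equiv.Perm (Fin m)) (i : Fin m) (x : G) (h : p i = i) :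
    (inr p : Wr G m) * inl (Pi.mulSingle i x) = inl (Pi.mulSingle i x) * inr p := by
  ext <;> simp [SG.permHom_mulSingle, h]

lemma SG.conj_inl_inr (f : Fin m → G) (p q : Equiv.Perm (Fin m)) :
    ((inl f * inr p) : Wr G m) * inr q * (inl f * inr p)⁻¹
      = inl f * inr (p * q * p⁻¹) * (inl f)⁻¹ := by
  calc ((inl f * inr p) : Wr G m) * inr q * (inl f * inr p)⁻¹
      = inl f * (inr p * inr q * (inr p)⁻¹) * (inl f)⁻¹ := by
        rw [mul_inv_rev]; group
    _ = inl f * inr (p * q * p⁻¹) * (inl f)⁻¹ := by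
        rw [map_mul, map_mul, map_inv]

lemma SG.conj_inl_single (q : Equiv.Perm (Fin m)) (i : Fin m) (x : G) (h : q i = i) :
    (inl (Pi.mulSingle i x) : Wr G m) * inr q * (inl (Pi.mulSingle i x))⁻¹ = inr q := by
  rw [← SG.commS q i x h, mul_inv_cancel_right]

lemma SG.fin_mk_add_one {n j : ℕ} (h : j + 1 < n + 1) :
    (⟨j, Nat.lt_of_succ_lt h⟩ : Fin (n+1)) + 1 = ⟨j+1, h⟩ := by
  have hne : (⟨j, Nat.lt_of_succ_lt h⟩ : Fin (n+1)) ≠ Fin.last n := by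
    simp only [ne_eq, Fin.ext_iff, Fin.val_last]; omega
  apply Fin.ext
  rw [Fin.val_add_one, if_neg hne]

lemma SG.cycleRange_mk_succ {n : ℕ} (j : ℕ) (h : j + 1 < n + 1) :
    Fin.cycleRange (⟨j+1, h⟩ : Fin (n+1)) =
      Fin.cycleRange ⟨j, Nat.lt_of_succ_lt h⟩ *
        Equiv.swap ⟨j, Nat.lt_of_succ_lt h⟩ ⟨j+1, h⟩ := by
  ext x
  rw [Equiv.Perm.mul_apply]
  rcases lt_trichotomy (x : ℕ) j with hx | hx | hx
  · have hs : Equiv.swap (⟨j, Nat.lt_of_succ_lt h⟩ : Fin (n+1)) ⟨j+1, h⟩ x = x :=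
      Equiv.swap_apply_of_ne_of_ne (by simp [Fin.ext_iff]; omega) (by simp [Fin.ext_iff]; omega)
    rw [hs, Fin.cycleRange_of_lt (by simp [Fin.lt_def]; omega),
      Fin.cycleRange_of_lt (by simp [Fin.lt_def]; omega)]
  · have hxj : x = (⟨j, Nat.lt_of_succ_lt h⟩ : Fin (n+1)) := Fin.ext (by simpa using hx)
    rw [hxj]
    have L : Fin.cycleRange (⟨j+1, h⟩ : Fin (n+1)) ⟨j, Nat.lt_of_succ_lt h⟩ = ⟨j+1, h⟩ := by
      rw [Fin.cycleRange_of_lt (by simp [Fin.lt_def]), SG.fin_mk_add_one h]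
    have R1 : Equiv.swap (⟨j, Nat.lt_of_succ_lt h⟩ : Fin (n+1)) ⟨j+1, h⟩
        ⟨j, Nat.lt_of_succ_lt h⟩ = ⟨j+1, h⟩ := by
      rw [Equiv.swap_apply_left]
    have R2 : Fin.cycleRange (⟨j, Nat.lt_of_succ_lt h⟩ : Fin (n+1)) ⟨j+1, h⟩ = ⟨j+1, h⟩ :=
      Fin.cycleRange_of_gt (by simp [Fin.lt_def])
    rw [L, R1, R2]
  · rcases eq_or_lt_of_le (Nat.succ_le_of_lt hx) with hx1 | hx1
    · have hxj : x = (⟨j+1, h⟩ : Fin (n+1)) := Fin.ext (by simpa using hx1.symm)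
      rw [hxj]
      have R1 : Equiv.swap (⟨j, Nat.lt_of_succ_lt h⟩ : Fin (n+1)) ⟨j+1, h⟩ ⟨j+1, h⟩
          = ⟨j, Nat.lt_of_succ_lt h⟩ := by
        rw [Equiv.swap_apply_right]
      rw [R1, Fin.cycleRange_self, Fin.cycleRange_self]
    · have hs : Equiv.swap (⟨j, Nat.lt_of_succ_lt h⟩ : Fin (n+1)) ⟨j+1, h⟩ x = x :=
        Equiv.swap_apply_of_ne_of_ne (by simp [Fin.ext_iff]; omega) (by simp [Fin.ext_iff]; omega)
      rw [hs, Fin.cycleRange_of_gt (by simp [Fin.lt_def]; omega),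
        Fin.cycleRange_of_gt (by simp [Fin.lt_def]; omega)]

end AuxSG

set_option maxHeartbeats 1600000 in
open SemidirectProduct in
/-- Let `g ∈ G` have odd (finite) order and `σ ∈ G` order `2`. If `H` is the
subgroup of `G ≀ S_m` generated by `a = [σ,2]·(1,…,m)` and `b = [g,3]·(1,2)`, then
`[g,3]`, `[σ,1]`, the `m`-cycle `(1,…,m)` and the transposition `(1,2)` all lie in `H`.
(Coordinates are `0`-indexed here, and the paper's `m`-cycle corresponds to
`(finRotate m)⁻¹` under the translation from left-to-right to Mathlib conventions.) -/
theorem strange_generators (G : Type*) [Group G] (m : ℕ) (hm : 3 ≤ m) (g σ : G)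
    (hg : Odd (orderOf g)) (hgfin : IsOfFinOrder g) (hσ : orderOf σ = 2) :
    let i1 : Fin m := ⟨0, by omega⟩
    let i2 : Fin m := ⟨1, by omega⟩
    let i3 : Fin m := ⟨2, by omega⟩
    let c : Equiv.Perm (Fin m) := (finRotate m)⁻¹
    let a : Wr G m := inl (Pi.mulSingle i2 σ) * inr c
    let b : Wr G m := inl (Pi.mulSingle i3 g) * inr (Equiv.swap i1 i2)
    let H : Subgroup (Wr G m) := Subgroup.closure {a, b}
    inl (Pi.mulSingle i3 g) ∈ H ∧ inl (Pi.mulSingle i1 σ) ∈ H ∧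
      inr c ∈ H ∧ inr (Equiv.swap i1 i2) ∈ H := by
  obtain ⟨n, rfl⟩ : ∃ n, m = n + 1 := ⟨m - 1, by omega⟩
  have hn : 2 ≤ n := by omega
  intro i1 i2 i3 c a b H
  have hadef : a = inl (Pi.mulSingle i2 σ) * inr c := rfl
  have hbdef : b = inl (Pi.mulSingle i3 g) * inr (Equiv.swap i1 i2) := rfl
  -- basic membership
  have ha : a ∈ H := Subgroup.subset_closure (by simp)
  have hbH : b ∈ H := Subgroup.subset_closure (by simp)
  -- fixed point facts
  have hτ3 : Equiv.swap i1 i2 i3 = i3 :=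
    Equiv.swap_apply_of_ne_of_ne (Fin.ne_of_val_ne (show (2:ℕ) ≠ 0 by norm_num))
      (Fin.ne_of_val_ne (show (2:ℕ) ≠ 1 by norm_num))
  -- step 1 : [g,3] ∈ H
  have hb2 : b * b = inl (Pi.mulSingle i3 (g * g)) := by
    rw [hbdef, SG.mul_inl_inr, SG.permHom_mulSingle, hτ3, ← Pi.mulSingle_mul,
      Equiv.swap_mul_self, map_one, mul_one]
  obtain ⟨k, hk⟩ := hg
  have hG3 : inl (Pi.mulSingle i3 g) ∈ H := by
    have hgg : (g * g) ^ (k + 1) = g := by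
      rw [← pow_two, ← pow_mul, show 2 * (k + 1) = (2 * k + 1) + 1 by ring, pow_succ,
        ← hk, pow_orderOf_eq_one, one_mul]
    have hpow : b ^ (2 * (k + 1)) = inl (Pi.mulSingle i3 g) := by
      rw [pow_mul, pow_two, hb2, ← map_pow, ← Pi.mulSingle_pow, hgg]
    exact hpow ▸ pow_mem hbH _
  -- step 2 : the transposition ∈ H
  have hτH : inr (Equiv.swap i1 i2) ∈ H := by
    have e : (inl (Pi.mulSingle i3 g))⁻¹ * b = inr (Equiv.swap i1 i2) := by
      rw [hbdef, inv_mul_cancel_left]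
    exact e ▸ mul_mem (inv_mem hG3) hbH
  -- values of c
  have hc : ∀ (kk : ℕ) (hkk : kk + 1 < n + 1),
      c ⟨kk+1, hkk⟩ = ⟨kk, Nat.lt_of_succ_lt hkk⟩ := by
    intro kk hkk
    rw [show c = (finRotate (n+1))⁻¹ from rfl, Equiv.Perm.inv_eq_iff_eq,
      finRotate_succ_apply, SG.fin_mk_add_one hkk]
  have hcApp : ∀ (x y : Fin (n+1)), (x : ℕ) = (y : ℕ) + 1 → c x = y := by
    intro x y hxy
    have h2 : (y : ℕ) + 1 < n + 1 := by omega
    have ex : x = ⟨(y : ℕ) + 1, h2⟩ := Fin.ext hxy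
    have ey : (⟨(y : ℕ), Nat.lt_of_succ_lt h2⟩ : Fin (n+1)) = y := Fin.ext rfl
    rw [ex, hc _ h2, ey]
  have hc0 : c i1 = ⟨n, by omega⟩ := by
    rw [show c = (finRotate (n+1))⁻¹ from rfl, Equiv.Perm.inv_eq_iff_eq]
    exact finRotate_last'.symm
  have hcinv : c⁻¹ = finRotate (n+1) := by
    rw [show c = (finRotate (n+1))⁻¹ from rfl, inv_inv]
  -- conjugation rule
  have hconj : ∀ p : Perm (Fin (n+1)), (inr p : Wr G (n+1)) ∈ H → p i3 = i3 →
      (inr (c * p * c⁻¹) : Wr G (n+1)) ∈ H := by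
    intro p hp hfix
    have hq2 : (c * p * c⁻¹) i2 = i2 := by
      rw [Equiv.Perm.mul_apply, Equiv.Perm.mul_apply]
      have h1 : c⁻¹ i2 = i3 := by
        rw [hcinv, finRotate_succ_apply]
        exact SG.fin_mk_add_one (by omega)
      rw [h1, hfix]
      exact hcApp i3 i2 rfl
    have key : a * inr p * a⁻¹ = inr (c * p * c⁻¹) := by
      rw [hadef, SG.conj_inl_inr, SG.conj_inl_single _ i2 σ hq2]
    exact key ▸ mul_mem (mul_mem ha hp) (inv_mem ha)
  -- swap (0, n) ∈ H
  have Ec1 : c * Equiv.swap i1 i2 * c⁻¹ = Equiv.swap ⟨n, by omega⟩ ⟨0, by omega⟩ := by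
    have bb := (Equiv.swap_apply_apply c i1 i2).symm
    simp only [hc0, hcApp i2 i1 rfl] at bb
    exact bb
  have hρ0 : (inr (Equiv.swap (⟨0, by omega⟩ : Fin (n+1)) ⟨n, by omega⟩) : Wr G (n+1)) ∈ H := by
    have h := hconj _ hτH hτ3
    rw [Ec1, Equiv.swap_comm] at h
    exact h
  -- family of adjacent swaps
  have hCfam : ∀ d kk (_hk2 : 2 ≤ kk) (_hkd : kk + d + 1 = n),
      (inr (Equiv.swap (⟨kk, by omega⟩ : Fin (n+1)) ⟨kk+1, by omega⟩) : Wr G (n+1)) ∈ H := by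
    intro d
    induction d with
    | zero =>
      intro kk hk2 hkd
      have hfix : Equiv.swap (⟨0, by omega⟩ : Fin (n+1)) ⟨n, by omega⟩ i3 = i3 :=
        Equiv.swap_apply_of_ne_of_ne (Fin.ne_of_val_ne (show (2:ℕ) ≠ 0 by norm_num))
          (Fin.ne_of_val_ne (show (2:ℕ) ≠ n by omega))
      have h := hconj _ hρ0 hfix
      have e : c * Equiv.swap (⟨0, by omega⟩ : Fin (n+1)) ⟨n, by omega⟩ * c⁻¹ =
          Equiv.swap (⟨kk, by omega⟩ : Fin (n+1)) ⟨kk+1, by omega⟩ := by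
        have e1 : (⟨n-1, by omega⟩ : Fin (n+1)) = ⟨kk, by omega⟩ := Fin.ext (by simp; omega)
        have e2 : (⟨n, by omega⟩ : Fin (n+1)) = ⟨kk+1, by omega⟩ := Fin.ext (by simp; omega)
        have e3 : Equiv.swap (⟨n, by omega⟩ : Fin (n+1)) ⟨n-1, by omega⟩ =
            Equiv.swap (⟨kk, by omega⟩ : Fin (n+1)) ⟨kk+1, by omega⟩ := by
          simp only [e1, e2]
          exact Equiv.swap_comm _ _
        have bb := (Equiv.swap_apply_apply c (⟨0, by omega⟩ : Fin (n+1)) ⟨n, by omega⟩).symm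
        simp only [hc0,
          hcApp ⟨n, by omega⟩ (⟨n-1, by omega⟩ : Fin (n+1)) (by simp; omega)] at bb
        exact bb.trans e3
      rw [e] at h
      exact h
    | succ d ih =>
      intro kk hk2 hkd
      have prev := ih (kk+1) (by omega) (by omega)
      have hfix : Equiv.swap (⟨kk+1, by omega⟩ : Fin (n+1)) ⟨kk+1+1, by omega⟩ i3 = i3 :=
        Equiv.swap_apply_of_ne_of_ne (Fin.ne_of_val_ne (show (2:ℕ) ≠ kk+1 by omega))
          (Fin.ne_of_val_ne (show (2:ℕ) ≠ kk+1+1 by omega))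
      have h := hconj _ prev hfix
      have e : c * Equiv.swap (⟨kk+1, by omega⟩ : Fin (n+1)) ⟨kk+1+1, by omega⟩ * c⁻¹ =
          Equiv.swap (⟨kk, by omega⟩ : Fin (n+1)) ⟨kk+1, by omega⟩ := by
        have bb := (Equiv.swap_apply_apply c (⟨kk+1, by omega⟩ : Fin (n+1)) ⟨kk+1+1, by omega⟩).symm
        simp only [hcApp ⟨kk+1, by omega⟩ (⟨kk, by omega⟩ : Fin (n+1)) rfl,
          hcApp ⟨kk+1+1, by omega⟩ (⟨kk+1, by omega⟩ : Fin (n+1)) rfl] at bb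
        exact bb
      rw [e] at h
      exact h
  -- main downward induction
  have hMain : ∀ d j (_hj : 2 ≤ j) (_hjd : j + d = n),
      (inr (c * Fin.cycleRange ⟨j, by omega⟩) : Wr G (n+1)) ∈ H := by
    intro d
    induction d with
    | zero =>
      intro j hj hjd
      have e : (⟨j, by omega⟩ : Fin (n+1)) = Fin.last n := Fin.ext (by simp [Fin.val_last]; omega)
      have e2 : c * Fin.cycleRange (⟨j, by omega⟩ : Fin (n+1)) = 1 := by
        rw [e, Fin.cycleRange_last, ← hcinv, mul_inv_cancel]
      rw [e2, map_one]
      exact one_mem _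
    | succ d ih =>
      intro j hj hjd
      have prev := ih (j+1) (by omega) (by omega)
      have hsw := hCfam d j hj (by omega)
      have hcr : Fin.cycleRange (⟨j+1, by omega⟩ : Fin (n+1)) =
          Fin.cycleRange ⟨j, by omega⟩ * Equiv.swap ⟨j, by omega⟩ ⟨j+1, by omega⟩ :=
        SG.cycleRange_mk_succ j (by omega)
      have e : c * Fin.cycleRange (⟨j, by omega⟩ : Fin (n+1)) =
          (c * Fin.cycleRange ⟨j+1, by omega⟩) *
            Equiv.swap ⟨j, by omega⟩ ⟨j+1, by omega⟩ := by
        rw [hcr, ← mul_assoc, mul_swap_mul_self]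
      rw [e, map_mul]
      exact mul_mem prev hsw
  have h2 : (inr (c * Fin.cycleRange ⟨2, by omega⟩) : Wr G (n+1)) ∈ H :=
    hMain (n-2) 2 le_rfl (by omega)
  -- the final permutation identity
  have hcyc2 : Fin.cycleRange (⟨2, by omega⟩ : Fin (n+1)) =
      Equiv.swap i1 i2 * Equiv.swap i2 i3 := by
    have e1 := SG.cycleRange_mk_succ (n := n) 1 (by omega)
    have e0 := SG.cycleRange_mk_succ (n := n) 0 (by omega)
    have ez : Fin.cycleRange (⟨0, Nat.lt_of_succ_lt (by omega : (1:ℕ) < n+1)⟩ : Fin (n+1)) = 1 :=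
      Fin.cycleRange_mk_zero _
    rw [show (⟨2, by omega⟩ : Fin (n+1)) = ⟨1+1, by omega⟩ from rfl, e1, e0, ez, one_mul]
  have E2 : c * Equiv.swap i2 i3 * c⁻¹ = Equiv.swap i1 i2 := by
    have bb := (Equiv.swap_apply_apply c i2 i3).symm
    simp only [hcApp i2 i1 rfl, hcApp i3 i2 rfl] at bb
    exact bb
  have hcm : c * Equiv.swap i1 i2 = Equiv.swap ⟨n, by omega⟩ ⟨0, by omega⟩ * c := by
    rw [← Ec1, inv_mul_cancel_right]
  have hcm2 : c * Equiv.swap i2 i3 = Equiv.swap i1 i2 * c := by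
    rw [← E2, inv_mul_cancel_right]
  have hfinal : Equiv.swap i1 i2 * Equiv.swap (⟨0, by omega⟩ : Fin (n+1)) ⟨n, by omega⟩ *
      (c * Fin.cycleRange ⟨2, by omega⟩) = c := by
    rw [hcyc2]
    calc Equiv.swap i1 i2 * Equiv.swap (⟨0, by omega⟩ : Fin (n+1)) ⟨n, by omega⟩ *
        (c * (Equiv.swap i1 i2 * Equiv.swap i2 i3))
        = Equiv.swap i1 i2 * Equiv.swap (⟨0, by omega⟩ : Fin (n+1)) ⟨n, by omega⟩ *
          (c * Equiv.swap i1 i2 * Equiv.swap i2 i3) := by rw [mul_assoc c]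
      _ = Equiv.swap i1 i2 * Equiv.swap (⟨0, by omega⟩ : Fin (n+1)) ⟨n, by omega⟩ *
          (Equiv.swap ⟨n, Nat.lt_succ_self n⟩ ⟨0, Nat.succ_pos n⟩ * c * Equiv.swap i2 i3) := by rw [hcm]
      _ = Equiv.swap i1 i2 * Equiv.swap (⟨0, by omega⟩ : Fin (n+1)) ⟨n, by omega⟩ *
          (Equiv.swap ⟨n, Nat.lt_succ_self n⟩ ⟨0, Nat.succ_pos n⟩ * (Equiv.swap i1 i2 * c)) := by
            rw [mul_assoc _ c, hcm2]
      _ = c := by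
            rw [Equiv.swap_comm (⟨n, by omega⟩ : Fin (n+1)) ⟨0, by omega⟩,
              ← mul_assoc, mul_swap_mul_self, ← mul_assoc, Equiv.swap_mul_self, one_mul]
  -- c ∈ H
  have hcH : inr c ∈ H := by
    have h := mul_mem (mul_mem hτH hρ0) h2
    rw [← map_mul, ← map_mul, hfinal] at h
    exact h
  -- [σ,2] ∈ H, then [σ,1] ∈ H
  have hsH : inl (Pi.mulSingle i2 σ) ∈ H := by
    have h := mul_mem ha (inv_mem hcH)
    have e : a * (inr c)⁻¹ = inl (Pi.mulSingle i2 σ) := by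
      rw [hadef, mul_inv_cancel_right]
    rwa [e] at h
  have hσ1 : inl (Pi.mulSingle i1 σ) ∈ H := by
    have h := mul_mem (mul_mem hτH hsH) (inv_mem hτH)
    have e : inr (Equiv.swap i1 i2) * inl (Pi.mulSingle i2 σ) * (inr (Equiv.swap i1 i2))⁻¹ =
        (inl (Pi.mulSingle i1 σ) : Wr G (n+1)) := by
      rw [← map_inv, ← inl_aut, SG.permHom_mulSingle, Equiv.swap_apply_right]
    rwa [e] at h
  exact ⟨hG3, hσ1, hcH, hτH⟩
end

section
/- Let n₁,…,n_k ≥ 2. The parity homomorphism ε : S_{n_k} ≀ S_{n_{k-1}} ≀ ⋯ ≀ S_{n_1} → (ℤ/2)^k, sending an element of the iterated wreath product to the tuple of signs of its induced permutations on each level, is surjective. -/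
open Equiv

/-- The iterated wreath product `S_{n_k} ≀ ⋯ ≀ S_{n_1}` as a bundled group:
`IWGrp [] = 1` and `IWGrp (n₁ :: ns) = IWGrp ns ≀ S_{n₁} = (IWGrp ns)^{n₁} ⋊ S_{n₁}`. -/
def IWGrp : List ℕ → GrpCat
  | [] => GrpCat.of PUnit
  | n :: ns => GrpCat.of ((Fin n → IWGrp ns) ⋊[permHom (IWGrp ns) n] Equiv.Perm (Fin n))

/-- The underlying type of the iterated wreath product. -/
abbrev IW (ns : List ℕ) : Type := IWGrp ns

/-- The sign of a permutation, written additively in `ℤ/2`. -/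
def sign2 {m : ℕ} (π : Equiv.Perm (Fin m)) : ZMod 2 :=
  if Equiv.Perm.sign π = 1 then 0 else 1

/-- The level-wise parity map `ε : S_{n_k} ≀ ⋯ ≀ S_{n_1} → (ℤ/2)^k`: the `j`-th entry is
the sign of the permutation induced on `[1..n₁] × ⋯ × [1..n_j]`.  (For `x = (f, π)` the
permutation induced on level `j+1` is built from `π` permuting the `n₁` blocks, each of
size `n₂⋯n_{j+1}`, composed with the level-`j` permutations induced by the `f i`;
its sign is `sign(π)^{n₂⋯n_{j+1}} · ∏ᵢ sign_j(f i)`, written below additively.) -/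
def eps : (ns : List ℕ) → IW ns → List (ZMod 2)
  | [], _ => []
  | n :: ns, x =>
    let y := (x : (Fin n → IW ns) ⋊[permHom (IW ns) n] Equiv.Perm (Fin n))
    sign2 y.right ::
      (List.range ns.length).map fun j =>
        ((ns.take j).prod : ZMod 2) * sign2 y.right +
          ∑ i : Fin n, ((eps ns (y.left i)).getD j 0)

lemma sign2_one {m : ℕ} : sign2 (1 : Equiv.Perm (Fin m)) = 0 := by
  simp [sign2]

lemma eps_one : ∀ ns : List ℕ, eps ns (1 : IW ns) = List.replicate ns.length 0
  | [] => rfl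
  | n :: ns => by
    have ih := eps_one ns
    show eps (n :: ns) (1 : (Fin n → IW ns) ⋊[permHom (IW ns) n] Equiv.Perm (Fin n)) = _
    simp [eps, sign2_one, ih, List.replicate_succ]

/-- For `n₁,…,n_k ≥ 2` the level-wise parity homomorphism
`ε : S_{n_k} ≀ ⋯ ≀ S_{n_1} → (ℤ/2)^k` is surjective. -/
theorem eps_surjective (ns : List ℕ) (h : ∀ n ∈ ns, 2 ≤ n) :
    ∀ l : List (ZMod 2), l.length = ns.length → ∃ x : IW ns, eps ns x = l := by
  induction ns with
  | nil =>
    intro l hl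
    have : l = [] := List.length_eq_zero_iff.mp hl
    exact ⟨1, by simp [this, eps]⟩
  | cons n ns ih =>
    rintro (_ | ⟨a, l'⟩) hl
    · simp at hl
    have hl' : l'.length = ns.length := by simpa using hl
    have hn : 2 ≤ n := h n List.mem_cons_self
    obtain ⟨x0, hx0⟩ := ih (fun m hm => h m (List.mem_cons_of_mem _ hm))
      ((List.range ns.length).map fun j => l'.getD j 0 + ((ns.take j).prod : ZMod 2) * a)
      (by simp [hl'])
    have h01 : (⟨0, by omega⟩ : Fin n) ≠ ⟨1, by omega⟩ := by simp [Fin.ext_iff]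
    set π : Equiv.Perm (Fin n) :=
      if a = 0 then 1 else Equiv.swap ⟨0, by omega⟩ ⟨1, by omega⟩ with hπ
    have hsπ : sign2 π = a := by
      rcases (show a = 0 ∨ a = 1 from by fin_cases a; exacts [Or.inl rfl, Or.inr rfl]) with rfl | rfl
      · simp [hπ, sign2_one]
      · simp [hπ, sign2, Equiv.Perm.sign_swap h01]
    refine ⟨(⟨fun i => if i = ⟨0, by omega⟩ then x0 else 1, π⟩ :
      (Fin n → IW ns) ⋊[permHom (IW ns) n] Equiv.Perm (Fin n)), ?_⟩
    show eps (n :: ns) _ = a :: l'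
    simp only [eps]
    refine List.cons_eq_cons.mpr ⟨hsπ, ?_⟩
    · apply List.ext_getElem (by simp [hl'])
      intro j h1 h2
      have hj : j < ns.length := by simpa using h1
      have hsum : (∑ i : Fin n,
          ((eps ns (if i = (⟨0, by omega⟩ : Fin n) then x0 else 1)).getD j 0)) =
          l'.getD j 0 + ((ns.take j).prod : ZMod 2) * a := by
        simp only [apply_ite (fun z : IW ns => (eps ns z).getD j 0), eps_one]
        have hrep : (List.replicate ns.length (0 : ZMod 2)).getD j 0 = 0 := by
          simp [List.getD, List.getElem?_replicate, hj]
        rw [hrep, Finset.sum_ite_eq' Finset.univ]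
        simp [hx0, List.getD, hj]
      simp only [List.getElem_map, List.getElem_range, hsπ, hsum]
      have h2' : j < l'.length := by omega
      have hch : ∀ z : ZMod 2, z + z = 0 := by decide
      rw [List.getD_eq_getElem l' 0 h2']
      ring_nf
      simp [show (2 : ZMod 2) = 0 from rfl]
end

section
/- Let n₁,…,n_k ≥ 2. Then the rank (minimal number of generators) of the iterated wreath product G = S_{n_k} ≀ S_{n_{k-1}} ≀ ⋯ ≀ S_{n_1} is at least k. -/
open Equiv

/-- The rank of a group: the least cardinality of a generating set. -/
noncomputable def grpRank (G : Type*) [Group G] : Cardinal :=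
  ⨅ X : {X : Set G // Subgroup.closure X = ⊤}, Cardinal.mk X

/-- The parity homomorphism `ℤˣ → ZMod 2`. -/
def u2 : ℤˣ →* Multiplicative (ZMod 2) where
  toFun x := Multiplicative.ofAdd (if x = 1 then 0 else 1)
  map_one' := by simp
  map_mul' a b := by
    rcases Int.units_eq_one_or a with ha | ha <;> rcases Int.units_eq_one_or b with hb | hb <;>
      subst ha <;> subst hb <;> decide

lemma fin_cons_add {k : ℕ} (p q : ZMod 2) (u v : Fin k → ZMod 2) :
    Fin.cons (p + q) (u + v) = (Fin.cons p u + Fin.cons q v : Fin (k+1) → ZMod 2) := by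
  funext j
  refine Fin.cases ?_ ?_ j <;> simp

/-- The "sign vector" homomorphism on a wreath product, given one on the base group. -/
def sdSign {H : Type*} [Group H] {k n : ℕ} (f : H →* Multiplicative (Fin k → ZMod 2)) :
    ((Fin n → H) ⋊[permHom H n] Equiv.Perm (Fin n)) →* Multiplicative (Fin (k+1) → ZMod 2) where
  toFun g := Multiplicative.ofAdd
    (Fin.cons (Multiplicative.toAdd (u2 (Equiv.Perm.sign g.right)))
      (Multiplicative.toAdd (∏ i, f (g.left i))))
  map_one' := by
    have h0 : (Fin.cons 0 0 : Fin (k+1) → ZMod 2) = 0 := by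
      funext j; refine Fin.cases ?_ ?_ j <;> simp
    simp [h0]
  map_mul' a b := by
    have hprod : (∏ i, f ((a * b).left i)) =
        (∏ i, f (a.left i)) * (∏ i, f (b.left i)) := by
      have : ∀ i, (a * b).left i = a.left i * b.left (a.right⁻¹ i) := fun i => rfl
      simp only [this, map_mul, Finset.prod_mul_distrib]
      congr 1
      exact Equiv.prod_comp (a.right⁻¹ : Equiv.Perm (Fin n)) (fun i => f (b.left i))
    have hr : (a * b).right = a.right * b.right := rfl
    have hs : u2 (Equiv.Perm.sign (a * b).right) =
        u2 (Equiv.Perm.sign a.right) * u2 (Equiv.Perm.sign b.right) := by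
      rw [hr, map_mul, map_mul]
    show Multiplicative.ofAdd _ = Multiplicative.ofAdd _ * Multiplicative.ofAdd _
    rw [hprod, hs, toAdd_mul, toAdd_mul, fin_cons_add, ofAdd_add]

noncomputable def iwSign : ∀ ns : List ℕ, IW ns →* Multiplicative (Fin ns.length → ZMod 2)
  | [] => 1
  | n :: ns => sdSign (iwSign ns)

lemma sdSign_surjective {H : Type*} [Group H] {k n : ℕ} (hn : 2 ≤ n)
    (f : H →* Multiplicative (Fin k → ZMod 2)) (hf : Function.Surjective f) :
    Function.Surjective (sdSign (n := n) f) := by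
  intro v
  haveI : NeZero n := ⟨by omega⟩
  obtain ⟨g, hg⟩ := hf (Multiplicative.ofAdd (Fin.tail (Multiplicative.toAdd v)))
  have h01 : (0 : Fin n) ≠ 1 := by
    rw [Fin.ne_iff_vne, Fin.val_zero, Fin.val_one', Nat.mod_eq_of_lt (by omega)]
    omega
  set π : Equiv.Perm (Fin n) :=
    if Multiplicative.toAdd v 0 = 0 then 1 else Equiv.swap 0 1 with hπ
  refine ⟨⟨fun i => if i = 0 then g else 1, π⟩, ?_⟩
  show Multiplicative.ofAdd
      (Fin.cons (Multiplicative.toAdd (u2 (Equiv.Perm.sign π)))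
        (Multiplicative.toAdd (∏ i : Fin n, f (if i = 0 then g else 1)))) = v
  have hprod : (∏ i : Fin n, f (if i = 0 then g else 1)) = f g := by
    rw [Finset.prod_eq_single 0]
    · simp
    · intro b _ hb; simp [hb]
    · simp
  have hhead : Multiplicative.toAdd (u2 (Equiv.Perm.sign π)) = Multiplicative.toAdd v 0 := by
    by_cases hv : Multiplicative.toAdd v 0 = 0
    · rw [hπ, if_pos hv, hv]; simp [u2]
    · rw [hπ, if_neg hv, Equiv.Perm.sign_swap h01]
      have h2 : ∀ a : ZMod 2, a ≠ 0 → a = 1 := by decide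
      rw [h2 _ hv]; decide
  rw [hprod, hhead, hg]
  show Multiplicative.ofAdd
      (Fin.cons (Multiplicative.toAdd v 0) (Fin.tail (Multiplicative.toAdd v))) = v
  rw [Fin.cons_self_tail]
  rfl

lemma iwSign_surjective : ∀ (ns : List ℕ), (∀ n ∈ ns, 2 ≤ n) →
    Function.Surjective (iwSign ns)
  | [], _ => fun v =>
    ⟨1, Multiplicative.toAdd.injective (funext fun i => Fin.elim0 i)⟩
  | n :: ns, h =>
    sdSign_surjective (h n (by simp)) (iwSign ns)
      (iwSign_surjective ns (fun m hm => h m (List.mem_cons_of_mem _ hm)))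

lemma gen_card_ge (k : ℕ) (s : Set (Multiplicative (Fin k → ZMod 2)))
    (hs : Subgroup.closure s = ⊤) : (k : Cardinal) ≤ Cardinal.mk s := by
  set s' : Set (Fin k → ZMod 2) := Multiplicative.toAdd '' s with hs'
  have hspan : Submodule.span (ZMod 2) s' = ⊤ := by
    have hsub : s ⊆
        (AddSubgroup.toSubgroup ((Submodule.span (ZMod 2) s').toAddSubgroup) : Set _) := by
      intro x hx
      show Multiplicative.toAdd x ∈ Submodule.span (ZMod 2) s'
      exact Submodule.subset_span ⟨x, hx, rfl⟩
    have htop := (Subgroup.closure_le _).2 hsub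
    rw [hs, top_le_iff] at htop
    rw [Submodule.eq_top_iff']
    intro y
    have hy : Multiplicative.ofAdd y ∈
        AddSubgroup.toSubgroup ((Submodule.span (ZMod 2) s').toAddSubgroup) := by
      rw [htop]; trivial
    exact hy
  have h1 : (k : Cardinal) = Module.rank (ZMod 2) (Fin k → ZMod 2) := (rank_fin_fun k).symm
  have h2 : Module.rank (ZMod 2) (Fin k → ZMod 2) ≤ Cardinal.mk s' := by
    have := rank_span_le (R := ZMod 2) s'
    rwa [hspan, rank_top] at this
  calc (k : Cardinal) ≤ Cardinal.mk s' := h1 ▸ h2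
    _ ≤ Cardinal.mk s := Cardinal.mk_image_le

/-- For `n₁,…,n_k ≥ 2` the rank of the iterated wreath product
`S_{n_k} ≀ ⋯ ≀ S_{n_1}` is at least `k`. -/
theorem iw_rank_ge (ns : List ℕ) (h : ∀ n ∈ ns, 2 ≤ n) :
    (ns.length : Cardinal) ≤ grpRank (IW ns) := by
  haveI : Nonempty {X : Set (IW ns) // Subgroup.closure X = ⊤} :=
    ⟨⟨Set.univ, Subgroup.closure_univ⟩⟩
  apply le_ciInf
  rintro ⟨X, hX⟩
  have hsurj := iwSign_surjective ns h
  have hclos : Subgroup.closure (iwSign ns '' X) = ⊤ := by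
    rw [← MonoidHom.map_closure, hX, Subgroup.map_top_of_surjective _ hsurj]
  calc (ns.length : Cardinal) ≤ Cardinal.mk (iwSign ns '' X) :=
        gen_card_ge _ _ hclos
    _ ≤ Cardinal.mk X := Cardinal.mk_image_le
end
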